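/- (Hyperbolic centering) Let x₁, ..., x_N ∈ 𝕃^d and define m_x = (1/√(-[x̄, x̄])) · (1/N) Σₙ 𝒫(xₙ), where x̄ = (1/N) Σₙ xₙ. Then (1/N) Σₙ 𝒫(R_{-m_x} xₙ) = 0, i.e., translating by -m_x centers the projected point set at the origin. -/

import Mathlib

open Matrix BigOperators

noncomputable section

/-- The Lorentzian signature matrix H = diag(-1, 1, ..., 1). -/
def Hm (d : ℕ) : Matrix (Fin (d+1)) (Fin (d+1)) ℝ :=
  Matrix.diagonal (fun i => if i = 0 then -1 else 1)

/-- The Lorentzian inner product [x, y] = xᵀ H y. -/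
def lprod {d : ℕ} (x y : Fin (d+1) → ℝ) : ℝ := x ⬝ᵥ (Hm d).mulVec y

/-- The 'Loid model of hyperbolic space. -/
def Loid (d : ℕ) : Set (Fin (d+1) → ℝ) := {x | lprod x x = -1 ∧ 0 < x 0}

/-- The projection dropping the first coordinate. -/
def Pproj {d : ℕ} (x : Fin (d+1) → ℝ) : Fin d → ℝ := fun i => x i.succ

/-- The lift z ↦ (√(1+‖z‖²), z). -/
def Qlift {d : ℕ} (z : Fin d → ℝ) : Fin (d+1) → ℝ :=
  Fin.cons (Real.sqrt (1 + ∑ i, z i ^ 2)) z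

/-- The positive semidefinite square root of I + b bᵀ (explicit formula;
for b = 0 the coefficient is 0 by division-by-zero convention, giving I). -/
def sqrtIbb {d : ℕ} (b : Fin d → ℝ) : Matrix (Fin d) (Fin d) ℝ :=
  1 + ((Real.sqrt (1 + ∑ i, b i ^ 2) - 1) / (∑ i, b i ^ 2)) • Matrix.vecMulVec b b

/-- The hyperbolic rotation matrix R_U = [[1, 0ᵀ], [0, U]]. -/
def RU {d : ℕ} (U : Matrix (Fin d) (Fin d) ℝ) : Matrix (Fin (d+1)) (Fin (d+1)) ℝ :=
  Matrix.of (Fin.cons (Fin.cons 1 0) (fun i => Fin.cons 0 (U i)))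

/-- The hyperbolic translation matrix R_b = [[√(1+‖b‖²), bᵀ], [b, (I + b bᵀ)^{1/2}]]. -/
def Rb {d : ℕ} (b : Fin d → ℝ) : Matrix (Fin (d+1)) (Fin (d+1)) ℝ :=
  Matrix.of (Fin.cons (Fin.cons (Real.sqrt (1 + ∑ i, b i ^ 2)) b)
    (fun i => Fin.cons (b i) (sqrtIbb b i)))

/-- The hyperbolic centroid parameter m_x = (1/√(-[x̄,x̄])) · (1/N) Σₙ 𝒫(xₙ). -/
def centroid {d N : ℕ} (x : Fin N → (Fin (d+1) → ℝ)) : Fin d → ℝ :=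
  (1 / Real.sqrt (-(lprod ((N:ℝ)⁻¹ • ∑ n, x n) ((N:ℝ)⁻¹ • ∑ n, x n)))) •
    ((N:ℝ)⁻¹ • ∑ n, Pproj (x n))

lemma lprod_expand {d : ℕ} (x y : Fin (d+1) → ℝ) :
    lprod x y = -(x 0 * y 0) + ∑ i : Fin d, x i.succ * y i.succ := by
  simp only [lprod, Hm, dotProduct, Matrix.mulVec_diagonal]
  rw [Fin.sum_univ_succ]
  simp [Fin.succ_ne_zero]

lemma Rb_mulVec_succ {d : ℕ} (b : Fin d → ℝ) (v : Fin (d+1) → ℝ) (i : Fin d) :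
    (Rb b).mulVec v i.succ =
      b i * v 0 + (v i.succ +
        ((Real.sqrt (1 + ∑ j, b j ^ 2) - 1) / (∑ j, b j ^ 2)) * b i *
          ∑ j, b j * v j.succ) := by
  simp only [Rb, Matrix.mulVec, dotProduct, Matrix.of_apply, Fin.cons_succ]
  rw [Fin.sum_univ_succ]
  simp only [Fin.cons_zero, Fin.cons_succ, sqrtIbb, Matrix.add_apply, Matrix.smul_apply,
    Matrix.vecMulVec_apply, Matrix.one_apply, smul_eq_mul]
  congr 1
  rw [Finset.sum_congr rfl (fun j _ => add_mul _ _ _), Finset.sum_add_distrib]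
  congr 1
  · simp
  · rw [Finset.mul_sum]
    exact Finset.sum_congr rfl fun j _ => by ring

lemma key_alg (T S Zi ρ : ℝ) (hT : 0 < T) (hS : 0 ≤ S) (hρ : 0 < ρ)
    (hρ2 : ρ ^ 2 = T ^ 2 - S) :
    -(Zi / ρ) * T + (Zi + ((Real.sqrt (1 + S / ρ ^ 2) - 1) / (S / ρ ^ 2)) *
      (-(Zi / ρ)) * (-(S / ρ))) = 0 := by
  rcases eq_or_lt_of_le hS with h0 | hpos
  · have hρT : ρ = T := by
      have : ρ ^ 2 = T ^ 2 := by rw [hρ2, ← h0, sub_zero]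
      nlinarith
    rw [← h0]
    field_simp [hρT]
    simp [hρT]
  · have h2 : Real.sqrt (1 + S / ρ ^ 2) = T / ρ := by
      have h1 : 1 + S / ρ ^ 2 = T ^ 2 / ρ ^ 2 := by
        field_simp
        linarith [hρ2]
      rw [h1, ← div_pow, Real.sqrt_sq (by positivity)]
    rw [h2]
    field_simp
    ring

theorem stmt_13 (d N : ℕ) (hN : 0 < N) (x : Fin N → (Fin (d+1) → ℝ))
    (hx : ∀ n, x n ∈ Loid d) :
    (N:ℝ)⁻¹ • ∑ n, Pproj ((Rb (-(centroid x))).mulVec (x n)) = 0 := by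
  classical
  have hNe : Nonempty (Fin N) := ⟨⟨0, hN⟩⟩
  have hNne : (N:ℝ) ≠ 0 := Nat.cast_ne_zero.2 hN.ne'
  set T : ℝ := ∑ n, x n 0 with hTdef
  set Z : Fin d → ℝ := fun i => ∑ n, x n i.succ with hZdef
  set S : ℝ := ∑ i, Z i ^ 2 with hSdef
  have hxn : ∀ n, (x n 0) ^ 2 = 1 + ∑ i : Fin d, x n i.succ ^ 2 ∧ 0 < x n 0 := by
    intro n
    obtain ⟨h1, h2⟩ := hx n
    rw [lprod_expand] at h1
    refine ⟨?_, h2⟩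
    have : ∑ i : Fin d, x n i.succ * x n i.succ = ∑ i : Fin d, x n i.succ ^ 2 :=
      Finset.sum_congr rfl fun i _ => (sq (x n i.succ)).symm
    nlinarith [h1]
  have hT : 0 < T := Finset.sum_pos (fun n _ => (hxn n).2) Finset.univ_nonempty
  -- Euclidean norm bound : S < T^2
  set v : Fin N → EuclideanSpace ℝ (Fin d) := fun n => (WithLp.equiv 2 _).symm (fun i => x n i.succ) with hvdef
  have hvapp : ∀ n i, v n i = x n i.succ := fun n i => rfl
  have hvsumapp : ∀ i, (∑ n, v n) i = Z i := by
    intro i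
    rw [hZdef]
    rw [WithLp.ofLp_sum, Finset.sum_apply]
    exact Finset.sum_congr rfl fun n _ => hvapp n i
  have hnv : ∀ n, ‖v n‖ < x n 0 := by
    intro n
    rw [EuclideanSpace.norm_eq]
    have h1 : ∑ i, ‖v n i‖ ^ 2 = ∑ i : Fin d, x n i.succ ^ 2 := by
      refine Finset.sum_congr rfl fun i _ => ?_
      rw [hvapp, Real.norm_eq_abs, sq_abs]
    rw [h1]
    have h2 : Real.sqrt (∑ i : Fin d, x n i.succ ^ 2) <
        Real.sqrt (1 + ∑ i : Fin d, x n i.succ ^ 2) :=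
      Real.sqrt_lt_sqrt (by positivity) (by linarith)
    have h3 : Real.sqrt (1 + ∑ i : Fin d, x n i.succ ^ 2) = x n 0 := by
      rw [← (hxn n).1, Real.sqrt_sq (hxn n).2.le]
    linarith
  have hnormlt : ‖∑ n, v n‖ < T := by
    calc ‖∑ n, v n‖ ≤ ∑ n, ‖v n‖ := norm_sum_le _ _
      _ < ∑ n, x n 0 := Finset.sum_lt_sum_of_nonempty Finset.univ_nonempty
          (fun n _ => hnv n)
  have hSeq : S = ‖∑ n, v n‖ ^ 2 := by
    rw [EuclideanSpace.norm_eq, Real.sq_sqrt (by positivity), hSdef]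
    refine Finset.sum_congr rfl fun i _ => ?_
    rw [hvsumapp, Real.norm_eq_abs, sq_abs]
  have hS : 0 ≤ S := hSeq ▸ sq_nonneg _
  have hSlt : S < T ^ 2 := by
    rw [hSeq]
    exact pow_lt_pow_left₀ hnormlt (norm_nonneg _) two_ne_zero
  set ρ : ℝ := Real.sqrt (T ^ 2 - S) with hρdef
  have hρ : 0 < ρ := Real.sqrt_pos.2 (by linarith)
  have hρ2 : ρ ^ 2 = T ^ 2 - S := Real.sq_sqrt (by linarith)
  -- compute b
  have hb : -(centroid x) = fun i => -(Z i / ρ) := by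
    funext i
    have hX0 : ((N:ℝ)⁻¹ • ∑ n, x n) 0 = (N:ℝ)⁻¹ * T := by
      simp [hTdef, Finset.sum_apply]
    have hXs : ∀ j : Fin d, ((N:ℝ)⁻¹ • ∑ n, x n) j.succ = (N:ℝ)⁻¹ * Z j := by
      intro j
      simp [hZdef, Finset.sum_apply]
    have hL : -(lprod ((N:ℝ)⁻¹ • ∑ n, x n) ((N:ℝ)⁻¹ • ∑ n, x n))
        = ((N:ℝ)⁻¹) ^ 2 * (T ^ 2 - S) := by
      rw [lprod_expand, hX0]
      rw [Finset.sum_congr rfl fun j _ => by rw [hXs j]]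
      have : ∑ j : Fin d, (N:ℝ)⁻¹ * Z j * ((N:ℝ)⁻¹ * Z j)
          = ((N:ℝ)⁻¹) ^ 2 * S := by
        rw [hSdef, Finset.mul_sum]
        exact Finset.sum_congr rfl fun j _ => by ring
      rw [this]
      ring
    have hsq : Real.sqrt (-(lprod ((N:ℝ)⁻¹ • ∑ n, x n) ((N:ℝ)⁻¹ • ∑ n, x n)))
        = (N:ℝ)⁻¹ * ρ := by
      rw [hL, hρdef, Real.sqrt_mul (sq_nonneg _), Real.sqrt_sq (by positivity)]
    show -(centroid x i) = _
    have : centroid x i = (1 / ((N:ℝ)⁻¹ * ρ)) * ((N:ℝ)⁻¹ * Z i) := by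
      simp only [centroid, Pi.smul_apply, smul_eq_mul, hsq]
      congr 1
      rw [hZdef]
      simp [Pproj, Finset.sum_apply]
    rw [this]
    field_simp
  rw [hb]
  funext i
  simp only [Pi.smul_apply, Finset.sum_apply, smul_eq_mul, Pi.zero_apply, Pproj]
  simp only [Rb_mulVec_succ]
  have hbsq : ∑ j : Fin d, (-(Z j / ρ)) ^ 2 = S / ρ ^ 2 := by
    rw [hSdef, Finset.sum_div]
    exact Finset.sum_congr rfl fun j _ => by ring
  have hbZ : ∑ j : Fin d, (-(Z j / ρ)) * Z j = -(S / ρ) := by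
    rw [hSdef, ← neg_div, ← Finset.sum_neg_distrib, Finset.sum_div]
    exact Finset.sum_congr rfl fun j _ => by ring
  have hsplit : ∑ n, ((-(Z i / ρ)) * x n 0 + (x n i.succ +
        ((Real.sqrt (1 + S / ρ ^ 2) - 1) / (S / ρ ^ 2)) * (-(Z i / ρ)) *
          ∑ j, (-(Z j / ρ)) * x n j.succ))
      = -(Z i / ρ) * T + (Z i + ((Real.sqrt (1 + S / ρ ^ 2) - 1) / (S / ρ ^ 2)) *
          (-(Z i / ρ)) * (-(S / ρ))) := by
    rw [Finset.sum_add_distrib, Finset.sum_add_distrib, ← Finset.mul_sum, ← Finset.mul_sum]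
    congr 1
    congr 1
    congr 1
    rw [← hbZ, Finset.sum_comm]
    refine Finset.sum_congr rfl fun j _ => ?_
    rw [← Finset.mul_sum]
  rw [show (1 : ℝ) + ∑ j : Fin d, (-(Z j / ρ)) ^ 2 = 1 + S / ρ ^ 2 by rw [hbsq]] at *
  rw [hbsq, hsplit, key_alg T S (Z i) ρ hT hS hρ hρ2, mul_zero]
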